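/- Let n ≥ 1 and let u ∈ ℝⁿ be a unit vector, and let H = { x ∈ ℝⁿ : ⟨x, u⟩ > 0 } be the corresponding open half-space. Then for every C¹ function f : ℝⁿ → ℝ whose (compact) support is contained in H, one has ∫ |∇f(x)|² dγₙ(x) ≥ ∫ f(x)² dγₙ(x), where dγₙ = e^{−φₙ(x)} dx is the standard Gaussian probability measure on ℝⁿ. Equivalently, the first Dirichlet eigenvalue of the weighted Laplacian Δ_{φₙ} on the Gaussian half-space H is at least 1. -/

import Mathlib

noncomputable section

open scoped BigOperators
open MeasureTheory

/-- Euclidean space ℝⁿ. -/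
abbrev En (n : ℕ) := EuclideanSpace ℝ (Fin n)

/-- The Gaussian weight φₙ(x) = |x|²/2 + (n/2)·log(2π). -/
noncomputable def gaussW (n : ℕ) (x : En n) : ℝ :=
  ‖x‖ ^ 2 / 2 + (n / 2 : ℝ) * Real.log (2 * Real.pi)

lemma integral_lineDeriv_eq_zero {n : ℕ} {F : En n → ℝ} (hF : ContDiff ℝ 1 F)
    (hs : HasCompactSupport F) (v : En n) : ∫ x, lineDeriv ℝ F x v = 0 := by
  obtain ⟨C, hC⟩ := hF.lipschitzWith_of_hasCompactSupport hs one_ne_zero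
  have := LipschitzWith.integral_lineDeriv_mul_eq (μ := volume) (LipschitzWith.const (1:ℝ)) hC hs (-v)
  have h0 : ∀ x : En n, lineDeriv ℝ (fun _ : En n => (1:ℝ)) x (-v) = 0 := by
    intro x
    rw [(differentiableAt_const (1:ℝ)).lineDeriv_eq_fderiv]
    simp
  simpa [h0, neg_neg] using this.symm

/-- the first Dirichlet eigenvalue of the Gaussian half-space
H = {x : ⟨x,u⟩ > 0} is at least 1: for every C¹ function `f` with compact support
contained in H one has ∫ f² dγₙ ≤ ∫ |∇f|² dγₙ, where dγₙ = e^{−φₙ} dx. -/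
theorem stmt10 (n : ℕ) (hn : 1 ≤ n) (u : En n) (hu : ‖u‖ = 1)
    (f : En n → ℝ) (hf : ContDiff ℝ 1 f) (hsupp : HasCompactSupport f)
    (hsub : tsupport f ⊆ {x : En n | 0 < (inner ℝ x u : ℝ)}) :
    (∫ x : En n, f x ^ 2 * Real.exp (-gaussW n x))
      ≤ ∫ x : En n, ‖gradient f x‖ ^ 2 * Real.exp (-gaussW n x) := by
  have hfd : Differentiable ℝ f := hf.differentiable one_ne_zero
  set c : ℝ := (n / 2 : ℝ) * Real.log (2 * Real.pi) with hc
  have huu : (inner ℝ u u : ℝ) = 1 := by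
    rw [real_inner_self_eq_norm_sq, hu]; norm_num
  have hg_eq : (fun x : En n => (inner ℝ x u : ℝ)) = fun y : En n => (innerSL ℝ u) y :=
    funext fun y => by simp [real_inner_comm]
  have hgcont : Continuous (fun x : En n => (inner ℝ x u : ℝ)) := by
    rw [hg_eq]; exact (innerSL ℝ u).continuous
  have hgCD : ContDiff ℝ 1 (fun x : En n => (inner ℝ x u : ℝ)) := by
    rw [hg_eq]; exact (innerSL ℝ u).contDiff
  have hgaussCD : ContDiff ℝ 1 (gaussW n) :=
    ((contDiff_norm_sq (𝕜 := ℝ) (n := 1)).div_const 2).add contDiff_const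
  have hEcont : Continuous (fun x : En n => Real.exp (-gaussW n x)) :=
    Real.continuous_exp.comp (hgaussCD.continuous.neg)
  have hECD : ContDiff ℝ 1 (fun x : En n => Real.exp (-gaussW n x)) :=
    Real.contDiff_exp.comp hgaussCD.neg
  have hEpos : ∀ x : En n, 0 < Real.exp (-gaussW n x) := fun x => Real.exp_pos _
  set b : En n → ℝ := fun x => fderiv ℝ f x u with hbdef
  have hbcont : Continuous b :=
    (ContinuousLinearMap.apply ℝ ℝ u).continuous.comp (hf.continuous_fderiv one_ne_zero)
  set F : En n → ℝ := fun x => f x ^ 2 / (inner ℝ x u : ℝ) * Real.exp (-gaussW n x) with hFdef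
  set D : En n → ℝ := fun x =>
    (2 * (f x / (inner ℝ x u : ℝ)) * b x - (f x / (inner ℝ x u : ℝ)) ^ 2) * Real.exp (-gaussW n x)
    with hDdef
  have hoff : ∀ x : En n, x ∉ tsupport f → f =ᶠ[nhds x] 0 :=
    fun x hx => notMem_tsupport_iff_eventuallyEq.mp hx
  have hFoff : ∀ x : En n, x ∉ tsupport f → F =ᶠ[nhds x] 0 := fun x hx =>
    (hoff x hx).mono fun y hy => by
      simp only [Pi.zero_apply] at hy ⊢
      simp [hFdef, hy]
  -- F is C¹ with compact support
  have hFCD : ContDiff ℝ 1 F := by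
    rw [contDiff_iff_contDiffAt]
    intro x
    by_cases hx : x ∈ tsupport f
    · have hgx : (inner ℝ x u : ℝ) ≠ 0 := ne_of_gt (hsub hx)
      exact ((hf.contDiffAt.pow 2).div hgCD.contDiffAt hgx).mul hECD.contDiffAt
    · exact ContDiffAt.congr_of_eventuallyEq contDiffAt_const (hFoff x hx)
  have hFcs : HasCompactSupport F := by
    apply HasCompactSupport.intro hsupp
    intro x hx
    have h0 : f x = 0 := image_eq_zero_of_notMem_tsupport hx
    simp [hFdef, h0]
  -- the line derivative identity
  have hkey : ∀ x : En n, lineDeriv ℝ F x u = D x - f x ^ 2 * Real.exp (-gaussW n x) := by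
    intro x
    by_cases hx : x ∈ tsupport f
    · have hgxpos : (0:ℝ) < (inner ℝ x u : ℝ) := hsub hx
      have hgx : (inner ℝ x u : ℝ) ≠ 0 := ne_of_gt hgxpos
      have hx0 : x + (0:ℝ) • u = x := by simp
      -- derivative of t ↦ f (x + t u)
      have hft : HasDerivAt (fun t : ℝ => f (x + t • u)) (b x) 0 := by
        have hφ : HasDerivAt (fun t : ℝ => x + t • u) u 0 := by
          simpa using ((hasDerivAt_id (0:ℝ)).smul_const u).const_add x
        exact (hfd x).hasFDerivAt.comp_hasDerivAt_of_eq 0 hφ hx0.symm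
      -- derivative of t ↦ ⟪x + t u, u⟫
      have hgt : HasDerivAt (fun t : ℝ => (inner ℝ (x + t • u) u : ℝ)) 1 0 := by
        have hfun : (fun t : ℝ => (inner ℝ (x + t • u) u : ℝ)) = fun t => (inner ℝ x u : ℝ) + t := by
          funext t
          rw [inner_add_left, real_inner_smul_left, huu, mul_one]
        rw [hfun]
        simpa using (hasDerivAt_id (0:ℝ)).const_add ((inner ℝ x u : ℝ))
      -- derivative of t ↦ gaussW n (x + t u)
      have hWt : HasDerivAt (fun t : ℝ => gaussW n (x + t • u)) ((inner ℝ x u : ℝ)) 0 := by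
        have hfun : (fun t : ℝ => gaussW n (x + t • u))
            = fun t => (‖x‖ ^ 2 + 2 * ((inner ℝ x u : ℝ) * t) + t ^ 2) / 2 + c := by
          funext t
          simp only [gaussW, ← hc]
          congr 2
          rw [norm_add_sq_real, real_inner_smul_right, norm_smul, hu]
          simp only [Real.norm_eq_abs, mul_pow, sq_abs, mul_one]
          ring
        rw [hfun]
        have h1 : HasDerivAt (fun t : ℝ => ‖x‖ ^ 2 + 2 * ((inner ℝ x u : ℝ) * t) + t ^ 2)
            (2 * (inner ℝ x u : ℝ) + 2 * 0 ^ 1) 0 := by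
          have ha : HasDerivAt (fun t : ℝ => ‖x‖ ^ 2 + 2 * ((inner ℝ x u : ℝ) * t))
              (2 * (inner ℝ x u : ℝ)) 0 := by
            have := ((hasDerivAt_id (0:ℝ)).const_mul ((inner ℝ x u : ℝ))).const_mul 2
            simpa [mul_assoc] using this.const_add (‖x‖ ^ 2)
          exact ha.add (hasDerivAt_pow 2 0)
        have := (h1.div_const 2).add_const c
        exact this.congr_deriv (by ring)
      have hEt : HasDerivAt (fun t : ℝ => Real.exp (-gaussW n (x + t • u)))
          (Real.exp (-gaussW n x) * (-(inner ℝ x u : ℝ))) 0 := by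
        have := (hWt.neg).exp
        simpa [hx0] using this
      have hf2t : HasDerivAt (fun t : ℝ => f (x + t • u) ^ 2)
          ((2 : ℕ) * f (x + (0:ℝ) • u) ^ 1 * b x) 0 := hft.pow 2
      have hqt := hf2t.div hgt (by simpa [hx0] using hgx)
      have hFt := hqt.mul hEt
      have hline : HasLineDerivAt ℝ F _ x u := hFt
      rw [hline.lineDeriv]
      simp only [hx0, hDdef, pow_one, Nat.cast_ofNat, mul_one, Pi.div_apply]
      set s : ℝ := (inner ℝ x u : ℝ) with hs
      field_simp [hgx]
      ring
    · have hf0 : f x = 0 := image_eq_zero_of_notMem_tsupport hx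
      rw [(hFoff x hx).lineDeriv_eq]
      have h00 : lineDeriv ℝ (0 : En n → ℝ) x u = 0 := by
        simp [lineDeriv]
      rw [h00]
      simp [hDdef, hf0]
  -- integrability
  have hDcont : Continuous D := by
    rw [continuous_iff_continuousAt]
    intro x
    by_cases hx : x ∈ tsupport f
    · have hgx : (inner ℝ x u : ℝ) ≠ 0 := ne_of_gt (hsub hx)
      exact (((continuousAt_const.mul ((hf.continuous.continuousAt).div
        hgcont.continuousAt hgx)).mul hbcont.continuousAt).sub
        (((hf.continuous.continuousAt).div hgcont.continuousAt hgx).pow 2)).mul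
        hEcont.continuousAt
    · have hev : D =ᶠ[nhds x] 0 := (hoff x hx).mono fun y hy => by
        simp only [Pi.zero_apply] at hy ⊢
        simp [hDdef, hy]
      exact (continuousAt_congr hev).mpr continuousAt_const
  have hDcs : HasCompactSupport D := by
    apply HasCompactSupport.intro hsupp
    intro x hx
    have h0 : f x = 0 := image_eq_zero_of_notMem_tsupport hx
    simp [hDdef, h0]
  have ID : Integrable D := hDcont.integrable_of_hasCompactSupport hDcs
  have I1 : Integrable (fun x : En n => f x ^ 2 * Real.exp (-gaussW n x)) := by
    apply Continuous.integrable_of_hasCompactSupport ((hf.continuous.pow 2).mul hEcont)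
    apply HasCompactSupport.intro hsupp
    intro x hx
    have h0 : f x = 0 := image_eq_zero_of_notMem_tsupport hx
    simp [h0]
  have hgradcont : Continuous (fun x => gradient f x) :=
    (InnerProductSpace.toDual ℝ (En n)).symm.continuous.comp (hf.continuous_fderiv one_ne_zero)
  have I2 : Integrable (fun x : En n => ‖gradient f x‖ ^ 2 * Real.exp (-gaussW n x)) := by
    apply Continuous.integrable_of_hasCompactSupport ((hgradcont.norm.pow 2).mul hEcont)
    apply HasCompactSupport.intro hsupp
    intro x hx
    have h0 : fderiv ℝ f x = 0 := by
      by_contra h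
      exact hx (support_fderiv_subset ℝ h)
    have hg0 : gradient f x = 0 := by simp [gradient, h0]
    simp [hg0]
  -- integration by parts
  have hibp : ∫ x, (D x - f x ^ 2 * Real.exp (-gaussW n x)) = 0 := by
    rw [← integral_lineDeriv_eq_zero hFCD hFcs u]
    congr 1
    funext x
    rw [hkey x]
  have hDeq : ∫ x : En n, f x ^ 2 * Real.exp (-gaussW n x) = ∫ x, D x := by
    have hsub' := integral_sub ID I1
    rw [hibp] at hsub'
    linarith [hsub']
  have hpt : ∀ x : En n, D x ≤ ‖gradient f x‖ ^ 2 * Real.exp (-gaussW n x) := by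
    intro x
    have hb : (inner ℝ (gradient f x) u : ℝ) = b x := InnerProductSpace.toDual_symm_apply
    have h1 : (b x) ^ 2 ≤ ‖gradient f x‖ ^ 2 := by
      have h := abs_real_inner_le_norm (gradient f x) u
      rw [hu, mul_one, hb] at h
      nlinarith [abs_nonneg (b x), sq_abs (b x)]
    have h2 : 2 * (f x / (inner ℝ x u : ℝ)) * b x - (f x / (inner ℝ x u : ℝ)) ^ 2 ≤ (b x) ^ 2 := by
      nlinarith [sq_nonneg (f x / (inner ℝ x u : ℝ) - b x)]
    exact mul_le_mul_of_nonneg_right (h2.trans h1) (hEpos x).le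
  rw [hDeq]
  exact integral_mono ID I2 hpt
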